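/- For the function L_val(u1, u2) = (|u1| + |u1 − 2| + |u2| + |u2 + 2|) / √(3u1² + 3u2² − 8u1 + 8u2 − 2u1u2 + 16) defined for |u1| ≤ 1, |u2| ≤ 1, we have L_val(0,0) = 1 and L_val(u1,u2) > 1 for every (u1,u2) ≠ (0,0) in the domain; hence (0,0) is the unique global minimizer of L_val on [−1,1]². -/

import Mathlib

/-- L_val(0,0) = 1 and L_val(u1,u2) > 1 for all other (u1,u2) with |u1| ≤ 1, |u2| ≤ 1,
so (0,0) is the unique global minimizer of L_val on [−1,1]². -/
theorem stmt_15 :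
    let L : ℝ → ℝ → ℝ := fun u1 u2 =>
      (|u1| + |u1 - 2| + |u2| + |u2 + 2|) /
        Real.sqrt (3 * u1 ^ 2 + 3 * u2 ^ 2 - 8 * u1 + 8 * u2 - 2 * u1 * u2 + 16)
    L 0 0 = 1 ∧
    ∀ u1 u2 : ℝ, |u1| ≤ 1 → |u2| ≤ 1 → (u1, u2) ≠ (0, 0) → 1 < L u1 u2 := by
  intro L
  constructor
  · show (|(0:ℝ)| + |(0:ℝ) - 2| + |(0:ℝ)| + |(0:ℝ) + 2|) / _ = 1
    norm_num
  · intro u1 u2 h1 h2 hne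
    have h1' := abs_le.mp h1
    have h2' := abs_le.mp h2
    have hQ : 0 < 3 * u1 ^ 2 + 3 * u2 ^ 2 - 8 * u1 + 8 * u2 - 2 * u1 * u2 + 16 := by
      nlinarith [sq_nonneg (u1 - 1), sq_nonneg (u2 + 1), sq_nonneg (u1 - 1 - (u2 + 1))]
    have hne' : u1 ≠ 0 ∨ u2 ≠ 0 := by
      by_contra h
      push_neg at h
      exact hne (by simp [h.1, h.2])
    have hN : Real.sqrt (3 * u1 ^ 2 + 3 * u2 ^ 2 - 8 * u1 + 8 * u2 - 2 * u1 * u2 + 16) <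
        |u1| + |u1 - 2| + |u2| + |u2 + 2| := by
      have hpos : 0 < |u1| + |u1 - 2| + |u2| + |u2 + 2| := by
        have : (0:ℝ) < |u1 - 2| := abs_pos.mpr (by nlinarith)
        positivity
      rw [Real.sqrt_lt' hpos]
      have e2 : |u1 - 2| = 2 - u1 := by rw [abs_of_nonpos (by linarith)]; ring
      have e4 : |u2 + 2| = u2 + 2 := abs_of_nonneg (by linarith)
      rw [e2, e4]
      rcases le_or_gt 0 u1 with hu1 | hu1 <;> rcases le_or_gt 0 u2 with hu2 | hu2
      · rw [abs_of_nonneg hu1, abs_of_nonneg hu2]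
        rcases hne' with h0 | h0
        · have : 0 < u1 := lt_of_le_of_ne hu1 (Ne.symm h0)
          nlinarith [mul_nonneg hu1 hu2]
        · have : 0 < u2 := lt_of_le_of_ne hu2 (Ne.symm h0)
          nlinarith [mul_nonneg hu1 hu2]
      · rw [abs_of_nonneg hu1, abs_of_neg hu2]
        nlinarith [mul_nonneg hu1 (by linarith : (0:ℝ) ≤ u2 + 1),
          mul_nonneg hu1 (by linarith : (0:ℝ) ≤ 1 - u1),
          mul_pos (neg_pos.mpr hu2) (by linarith : (0:ℝ) < 8 + 3 * u2)]
      · rw [abs_of_neg hu1, abs_of_nonneg hu2]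
        nlinarith [mul_nonneg (le_of_lt (neg_pos.mpr hu1)) hu2, sq_nonneg u1, sq_nonneg u2]
      · rw [abs_of_neg hu1, abs_of_neg hu2]
        nlinarith [mul_pos (neg_pos.mpr hu1) (neg_pos.mpr hu2),
          mul_pos (neg_pos.mpr hu2) (by linarith : (0:ℝ) < 8 + 3 * u2), sq_nonneg u1]
    show 1 < (|u1| + |u1 - 2| + |u2| + |u2 + 2|) /
        Real.sqrt (3 * u1 ^ 2 + 3 * u2 ^ 2 - 8 * u1 + 8 * u2 - 2 * u1 * u2 + 16)
    rw [lt_div_iff₀ (Real.sqrt_pos.mpr hQ), one_mul]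
    exact hN
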